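/- arXiv:1511.04400 — 2 statements merged into one kernel-verified Lean document; each statement's English description precedes it below -/
import Mathlib

section
/- Let Y be a Banach space, M ⊆ Y a closed subspace, and y₀ ∈ M a best approximation of y ∈ Y in M. Then ‖y₀‖ ≤ (1 + C_AO(Y))‖y‖, where C_AO(Y) ∈ [0,1] is the asymmetric-orthogonality constant of Y. -/
/-- The duality mapping `J_Y(w) = {w* ∈ Y* : ⟨w*, w⟩ = ‖w‖² = ‖w*‖²}`. -/
def dualitySet {Y : Type*} [NormedAddCommGroup Y] [NormedSpace ℝ Y] (w : Y) :
    Set (Y →L[ℝ] ℝ) :=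
  {f | f w = ‖w‖ ^ 2 ∧ ‖w‖ ^ 2 = ‖f‖ ^ 2}

/-- The asymmetric-orthogonality constant
`C_AO(Y) = sup { ⟨z₀*, z⟩/(‖z‖‖z₀‖) : (z₀, z) ∈ O_Y, z₀* ∈ J_Y(z₀) }`, where
`O_Y = {(z₀, z) : ∃ z* ∈ J_Y(z), ⟨z*, z₀⟩ = 0}`. -/
noncomputable def CAO (Y : Type*) [NormedAddCommGroup Y] [NormedSpace ℝ Y] : ℝ :=
  sSup {r : ℝ | ∃ (z₀ z : Y) (z₀s : Y →L[ℝ] ℝ),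
    (∃ zs : Y →L[ℝ] ℝ, zs ∈ dualitySet z ∧ zs z₀ = 0) ∧
    z₀s ∈ dualitySet z₀ ∧ r = z₀s z / (‖z‖ * ‖z₀‖)}

lemma norm_eq_of_mem_dualitySet {Y : Type*} [NormedAddCommGroup Y] [NormedSpace ℝ Y]
    {w : Y} {f : Y →L[ℝ] ℝ} (hf : f ∈ dualitySet w) : ‖f‖ = ‖w‖ := by
  have h := hf.2
  nlinarith [norm_nonneg f, norm_nonneg w]

lemma CAO_bddAbove (Y : Type*) [NormedAddCommGroup Y] [NormedSpace ℝ Y] :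
    BddAbove {r : ℝ | ∃ (z₀ z : Y) (z₀s : Y →L[ℝ] ℝ),
    (∃ zs : Y →L[ℝ] ℝ, zs ∈ dualitySet z ∧ zs z₀ = 0) ∧
    z₀s ∈ dualitySet z₀ ∧ r = z₀s z / (‖z‖ * ‖z₀‖)} := by
  refine ⟨1, ?_⟩
  rintro r ⟨z₀, z, z₀s, _, hmem, rfl⟩
  have hn : ‖z₀s‖ = ‖z₀‖ := norm_eq_of_mem_dualitySet hmem
  rcases eq_or_lt_of_le (norm_nonneg z) with hz | hz
  · simp [← hz]
  rcases eq_or_lt_of_le (norm_nonneg z₀) with hz₀ | hz₀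
  · simp [← hz₀]
  rw [div_le_one (by positivity)]
  calc z₀s z ≤ ‖z₀s z‖ := le_abs_self _
    _ ≤ ‖z₀s‖ * ‖z‖ := z₀s.le_opNorm z
    _ = ‖z‖ * ‖z₀‖ := by rw [hn]; ring

lemma zero_mem_CAOset (Y : Type*) [NormedAddCommGroup Y] [NormedSpace ℝ Y] :
    (0:ℝ) ∈ {r : ℝ | ∃ (z₀ z : Y) (z₀s : Y →L[ℝ] ℝ),
    (∃ zs : Y →L[ℝ] ℝ, zs ∈ dualitySet z ∧ zs z₀ = 0) ∧
    z₀s ∈ dualitySet z₀ ∧ r = z₀s z / (‖z‖ * ‖z₀‖)} :=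
  ⟨0, 0, 0, ⟨0, ⟨by simp, by simp⟩, by simp⟩, ⟨by simp, by simp⟩, by simp⟩

lemma CAO_nonneg (Y : Type*) [NormedAddCommGroup Y] [NormedSpace ℝ Y] : 0 ≤ CAO Y :=
  le_csSup (CAO_bddAbove Y) (zero_mem_CAOset Y)

set_option maxHeartbeats 1000000 in
/-- Let `Y` be a Banach space, `M ⊆ Y` a closed subspace and
`y₀ ∈ M` a best approximation of `y` in `M`.  Then `‖y₀‖ ≤ (1 + C_AO(Y))‖y‖`. -/
theorem stmt15 {Y : Type*} [NormedAddCommGroup Y] [NormedSpace ℝ Y] [CompleteSpace Y]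
    (M : Submodule ℝ Y) (hM : IsClosed (M : Set Y)) (y : Y) (y₀ : Y) (hy₀ : y₀ ∈ M)
    (hbest : ∀ z ∈ M, ‖y - y₀‖ ≤ ‖y - z‖) :
    ‖y₀‖ ≤ (1 + CAO Y) * ‖y‖ := by
  set z := y - y₀ with hz
  have hC0 := CAO_nonneg Y
  have hzy : ‖z‖ ≤ ‖y‖ := by simpa using hbest 0 M.zero_mem
  have horth : ∀ m ∈ M, ‖z‖ ≤ ‖z - m‖ := by
    intro m hm
    have := hbest (y₀ + m) (M.add_mem hy₀ hm)
    simpa [hz, sub_add_eq_sub_sub] using this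
  -- a duality functional for z vanishing on M
  obtain ⟨zs, hzs, hzsM⟩ : ∃ zs : Y →L[ℝ] ℝ, zs ∈ dualitySet z ∧ ∀ m ∈ M, zs m = 0 := by
    rcases eq_or_ne z 0 with h0 | h0
    · exact ⟨0, ⟨by simp [h0], by simp [h0]⟩, fun m _ => rfl⟩
    · haveI : IsClosed (M : Set Y) := hM
      have hqn : ‖(Submodule.Quotient.mk z : Y ⧸ M)‖ = ‖z‖ := by
        refine le_antisymm (Submodule.Quotient.norm_mk_le M z) ?_
        refine le_of_forall_pos_le_add fun ε hε => ?_
        obtain ⟨m, hm, hmlt⟩ :=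
          Submodule.Quotient.norm_mk_lt (Submodule.Quotient.mk z : Y ⧸ M) hε
        have hdiff : z - m ∈ M := by
          have h' : m - z ∈ M := (Submodule.Quotient.eq M).1 hm
          simpa using M.neg_mem h'
        have : ‖z‖ ≤ ‖m‖ := by
          have := horth (z - m) hdiff
          simpa using this
        linarith
      have hq0 : (Submodule.Quotient.mk z : Y ⧸ M) ≠ 0 := by
        intro h
        apply h0
        have : ‖z‖ = 0 := by rw [← hqn, h, norm_zero]
        simpa using this
      obtain ⟨g, hg1, hgz⟩ := exists_dual_vector ℝ (Submodule.Quotient.mk z : Y ⧸ M) (norm_ne_zero_iff.2 hq0)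
      let Q : Y →L[ℝ] (Y ⧸ M) :=
        LinearMap.mkContinuous M.mkQ 1 (fun x => by
          simpa using Submodule.Quotient.norm_mk_le M x)
      have hQ : ∀ x : Y, Q x = Submodule.Quotient.mk x := fun x => rfl
      set f := g.comp Q with hf
      have hfz : f z = ‖z‖ := by
        have : f z = g (Submodule.Quotient.mk z) := rfl
        rw [this, ← hqn]
        exact_mod_cast hgz
      have hfle : ‖f‖ ≤ 1 := by
        refine ContinuousLinearMap.opNorm_le_bound _ zero_le_one fun x => ?_
        calc ‖f x‖ ≤ ‖g‖ * ‖Q x‖ := g.le_opNorm _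
          _ ≤ 1 * ‖x‖ := by
              rw [hg1]
              simpa [hQ] using Submodule.Quotient.norm_mk_le M x
      have hzpos : 0 < ‖z‖ := norm_pos_iff.2 h0
      have hval : (‖z‖ • f) z = ‖z‖ ^ 2 := by
        rw [ContinuousLinearMap.smul_apply, hfz, smul_eq_mul, sq]
      refine ⟨‖z‖ • f, ⟨hval, ?_⟩, ?_⟩
      · have hnorm_smul : ‖‖z‖ • f‖ = ‖z‖ * ‖f‖ := by
          rw [norm_smul ‖z‖ f, Real.norm_eq_abs, abs_of_nonneg (norm_nonneg z)]
        have hle : ‖‖z‖ • f‖ ≤ ‖z‖ := by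
          rw [hnorm_smul]; nlinarith
        have hge : ‖z‖ ≤ ‖‖z‖ • f‖ := by
          have h5 : ‖z‖ ^ 2 ≤ ‖‖z‖ • f‖ * ‖z‖ :=
            calc ‖z‖ ^ 2 = (‖z‖ • f) z := hval.symm
              _ ≤ ‖(‖z‖ • f) z‖ := le_abs_self _
              _ ≤ ‖‖z‖ • f‖ * ‖z‖ := (‖z‖ • f).le_opNorm z
          nlinarith
        rw [le_antisymm hle hge]
      · intro m hm
        have hm0 : (Submodule.Quotient.mk m : Y ⧸ M) = 0 := (Submodule.Quotient.mk_eq_zero M).2 hm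
        have : (‖z‖ • f) m = ‖z‖ * g (Submodule.Quotient.mk m) := rfl
        rw [this, hm0, map_zero, mul_zero]
  rcases eq_or_ne y₀ 0 with h0 | h0
  · rw [h0, norm_zero]; positivity
  obtain ⟨g, hg1, hgy₀⟩ := exists_dual_vector ℝ y₀ (norm_ne_zero_iff.2 h0)
  have hgy₀' : g y₀ = ‖y₀‖ := by exact_mod_cast hgy₀
  set z₀s : Y →L[ℝ] ℝ := ‖y₀‖ • g with hz₀s
  have hnz₀s : ‖z₀s‖ = ‖y₀‖ := by
    rw [hz₀s, norm_smul ‖y₀‖ g, Real.norm_eq_abs, abs_of_nonneg (norm_nonneg y₀), hg1, mul_one]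
  have hz₀sval : z₀s y₀ = ‖y₀‖ ^ 2 := by
    rw [hz₀s, ContinuousLinearMap.smul_apply, hgy₀', smul_eq_mul, sq]
  have hz₀smem : (-z₀s) ∈ dualitySet (-y₀) := by
    constructor
    · rw [ContinuousLinearMap.neg_apply, map_neg, neg_neg, hz₀sval, norm_neg]
    · rw [norm_neg, norm_neg, hnz₀s]
  have hmem : (-z₀s) z / (‖z‖ * ‖(-y₀ : Y)‖) ∈ {r : ℝ | ∃ (z₀ z : Y) (z₀s : Y →L[ℝ] ℝ),
      (∃ zs : Y →L[ℝ] ℝ, zs ∈ dualitySet z ∧ zs z₀ = 0) ∧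
      z₀s ∈ dualitySet z₀ ∧ r = z₀s z / (‖z‖ * ‖z₀‖)} := by
    refine ⟨-y₀, z, -z₀s, ⟨zs, hzs, ?_⟩, hz₀smem, rfl⟩
    rw [map_neg, hzsM y₀ hy₀, neg_zero]
  have hratio : (-z₀s) z / (‖z‖ * ‖y₀‖) ≤ CAO Y := by
    have h := le_csSup (CAO_bddAbove Y) hmem
    rwa [norm_neg] at h
  have hy₀pos : 0 < ‖y₀‖ := norm_pos_iff.2 h0
  have key : -(z₀s z) ≤ CAO Y * (‖z‖ * ‖y₀‖) := by
    rcases eq_or_lt_of_le (norm_nonneg z) with hznorm | hznorm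
    · have hz0 : z = 0 := by
        have := hznorm.symm
        simpa using this
      rw [hz0, map_zero, neg_zero]
      positivity
    · have hpos : 0 < ‖z‖ * ‖y₀‖ := mul_pos hznorm hy₀pos
      have h := (div_le_iff₀ hpos).1 hratio
      rw [ContinuousLinearMap.neg_apply] at h
      linarith
  have h2 : z₀s y₀ = z₀s y - z₀s z := by rw [hz]; simp
  have h3 : z₀s y ≤ ‖y₀‖ * ‖y‖ := by
    calc z₀s y ≤ ‖z₀s y‖ := le_abs_self _
      _ ≤ ‖z₀s‖ * ‖y‖ := z₀s.le_opNorm y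
      _ = ‖y₀‖ * ‖y‖ := by rw [hnz₀s]
  have h4 : CAO Y * (‖z‖ * ‖y₀‖) ≤ CAO Y * (‖y‖ * ‖y₀‖) :=
    mul_le_mul_of_nonneg_left (mul_le_mul_of_nonneg_right hzy (norm_nonneg y₀)) hC0
  nlinarith [hz₀sval, h2, h3, h4, key]
end

section
/- Let 1 < ρ < ∞, σ = ρ/(ρ-1), and I = (0,1). For every w ∈ W₀^{1,ρ}(I), sup over nonzero v ∈ W₀^{1,σ}(I) of ⟨w', v'⟩ / ‖v'‖_{L^σ} is at least (1/2)‖w'‖_{L^ρ}. In particular, the 1-D Laplace operator from W₀^{1,ρ}(0,1) to the dual of W₀^{1,σ}(0,1) is bounded below with constant 1/2. -/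
open MeasureTheory ENNReal

/-- Let `1 < ρ < ∞`, `σ = ρ/(ρ-1)` and `I = (0,1)`.  A function
`w ∈ W₀^{1,ρ}(I)` is represented by its derivative `g ∈ L^ρ(I)` via
`w(x) = ∫₀ˣ g` (so `w(0) = 0`), together with `w(1) = 0`; likewise nonzero
`v ∈ W₀^{1,σ}(I)` are represented by their derivatives `h ∈ L^σ(I)` with mean zero.
Then `sup_{0 ≠ v ∈ W₀^{1,σ}} ⟨w', v'⟩ / ‖v'‖_{L^σ} ≥ (1/2) ‖w'‖_{L^ρ}`: the 1-D Laplace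
operator from `W₀^{1,ρ}(0,1)` to the dual of `W₀^{1,σ}(0,1)` is bounded below by `1/2`. -/
theorem stmt17 (ρ σ : ℝ) (hρ : 1 < ρ) (hσ : σ = ρ / (ρ - 1))
    (w g : ℝ → ℝ)
    (hg : MemLp g (ENNReal.ofReal ρ) (volume.restrict (Set.Ioo (0:ℝ) 1)))
    (hw : ∀ x : ℝ, w x = ∫ t in Set.Ioc (0:ℝ) x, g t)
    (hw1 : w 1 = 0) :
    ENNReal.ofReal (1 / 2) * eLpNorm g (ENNReal.ofReal ρ) (volume.restrict (Set.Ioo (0:ℝ) 1)) ≤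
      ⨆ (h : ℝ → ℝ)
        (_ : MemLp h (ENNReal.ofReal σ) (volume.restrict (Set.Ioo (0:ℝ) 1)))
        (_ : ∫ t in Set.Ioo (0:ℝ) 1, h t = 0) (_ : ¬ h =ᵐ[volume.restrict (Set.Ioo (0:ℝ) 1)] 0),
        ENNReal.ofReal (∫ t in Set.Ioo (0:ℝ) 1, g t * h t) /
          eLpNorm h (ENNReal.ofReal σ) (volume.restrict (Set.Ioo (0:ℝ) 1)) := by
  set μ := volume.restrict (Set.Ioo (0:ℝ) 1) with hμdef
  set p := ENNReal.ofReal ρ with hpdef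
  set q := ENNReal.ofReal σ with hqdef
  have hρ0 : (0:ℝ) < ρ := by linarith
  have hρ1 : (0:ℝ) < ρ - 1 := by linarith
  have hσ1 : 1 < σ := by rw [hσ]; rw [one_lt_div hρ1]; linarith
  have hσ0 : (0:ℝ) < σ := by linarith
  have hρσ : (ρ - 1) * σ = ρ := by rw [hσ]; field_simp
  have hp0 : p ≠ 0 := by simp [hpdef, ENNReal.ofReal_pos.mpr hρ0, ne_of_gt]
  have hptop : p ≠ ∞ := ENNReal.ofReal_ne_top
  have hq0 : q ≠ 0 := by simp [hqdef, ENNReal.ofReal_pos.mpr hσ0, ne_of_gt]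
  have hqtop : q ≠ ∞ := ENNReal.ofReal_ne_top
  have hpr : p.toReal = ρ := ENNReal.toReal_ofReal hρ0.le
  have hqr : q.toReal = σ := ENNReal.toReal_ofReal hσ0.le
  have hp1 : (1:ℝ≥0∞) ≤ p := by rw [hpdef]; exact ENNReal.one_le_ofReal.mpr hρ.le
  have hq1 : (1:ℝ≥0∞) ≤ q := by rw [hqdef]; exact ENNReal.one_le_ofReal.mpr hσ1.le
  have huniv : μ Set.univ = 1 := by
    rw [hμdef, Measure.restrict_apply_univ, Real.volume_Ioo]
    norm_num
  haveI : IsProbabilityMeasure μ := ⟨huniv⟩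
  have hμ0 : μ ≠ 0 := IsProbabilityMeasure.ne_zero μ
  -- mean of g is zero
  have hgmean : ∫ t in Set.Ioo (0:ℝ) 1, g t = 0 := by
    rw [← MeasureTheory.integral_Ioc_eq_integral_Ioo, ← hw 1, hw1]
  -- the norm of g
  set N : ℝ := (eLpNorm g p μ).toReal with hNdef
  have hNfin : eLpNorm g p μ ≠ ∞ := hg.2.ne
  have hEg : eLpNorm g p μ = ENNReal.ofReal N := (ENNReal.ofReal_toReal hNfin).symm
  by_cases hN0 : eLpNorm g p μ = 0
  · rw [hN0, mul_zero]; exact zero_le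
  have hN : 0 < N := ENNReal.toReal_pos hN0 hNfin
  -- lintegral of |g|^ρ
  have hLg : ∫⁻ x, (‖g x‖₊ : ℝ≥0∞) ^ ρ ∂μ = (ENNReal.ofReal N) ^ ρ := by
    have h1 := eLpNorm_eq_lintegral_rpow_enorm_toReal hp0 hptop (f := g) (μ := μ)
    simp only [enorm_eq_nnnorm] at h1
    rw [hEg, hpr] at h1
    rw [h1, ← ENNReal.rpow_mul, one_div_mul_cancel hρ0.ne', ENNReal.rpow_one]
  -- the dual function
  set h₀ : ℝ → ℝ := fun t => g t * |g t| ^ (ρ - 2) with hh₀def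
  have habs : ∀ t, |h₀ t| = |g t| ^ (ρ - 1) := by
    intro t
    rcases eq_or_ne (g t) 0 with h | h
    · simp [hh₀def, h, Real.zero_rpow (by linarith : ρ - 1 ≠ 0)]
    · have hpos : 0 < |g t| := abs_pos.mpr h
      rw [hh₀def]
      simp only
      rw [abs_mul, abs_of_nonneg (Real.rpow_nonneg (abs_nonneg _) _)]
      calc |g t| * |g t| ^ (ρ - 2) = |g t| ^ (1:ℝ) * |g t| ^ (ρ - 2) := by
              rw [Real.rpow_one]
        _ = |g t| ^ (1 + (ρ - 2)) := (Real.rpow_add hpos _ _).symm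
        _ = |g t| ^ (ρ - 1) := by ring_nf
  have hmul : ∀ t, g t * h₀ t = |g t| ^ ρ := by
    intro t
    rcases eq_or_ne (g t) 0 with h | h
    · simp [hh₀def, h, Real.zero_rpow hρ0.ne']
    · have hpos : 0 < |g t| := abs_pos.mpr h
      rw [hh₀def]
      simp only
      rw [← mul_assoc]
      have : g t * g t = |g t| ^ (2:ℝ) := by
        rw [Real.rpow_two]; rw [sq_abs]; ring
      rw [this, ← Real.rpow_add hpos]
      norm_num
  have hgae : AEMeasurable g μ := hg.1.aemeasurable
  have hFmeas : Measurable fun x : ℝ => x * |x| ^ (ρ - 2) := by fun_prop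
  have hh₀meas : AEStronglyMeasurable h₀ μ :=
    (hFmeas.comp_aemeasurable hgae).aestronglyMeasurable
  -- pointwise nnnorm identity at exponent σ
  have hptw : ∀ x, (‖h₀ x‖₊ : ℝ≥0∞) ^ σ = (‖g x‖₊ : ℝ≥0∞) ^ ρ := by
    intro x
    rw [← enorm_eq_nnnorm, ← enorm_eq_nnnorm, ← ofReal_norm, ← ofReal_norm]
    rw [Real.norm_eq_abs, Real.norm_eq_abs]
    rw [ENNReal.ofReal_rpow_of_nonneg (abs_nonneg _) hσ0.le,
      ENNReal.ofReal_rpow_of_nonneg (abs_nonneg _) hρ0.le]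
    rw [habs x, ← Real.rpow_mul (abs_nonneg _), hρσ]
  have hEh₀ : eLpNorm h₀ q μ = ENNReal.ofReal (N ^ (ρ - 1)) := by
    rw [eLpNorm_eq_lintegral_rpow_enorm_toReal hq0 hqtop, hqr]
    simp only [enorm_eq_nnnorm]
    have : ∫⁻ x, (‖h₀ x‖₊ : ℝ≥0∞) ^ σ ∂μ = ∫⁻ x, (‖g x‖₊ : ℝ≥0∞) ^ ρ ∂μ :=
      lintegral_congr fun x => hptw x
    rw [this, hLg, ← ENNReal.rpow_mul]
    have : ρ * (1 / σ) = ρ - 1 := by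
      field_simp
      linarith [hρσ]
    rw [this, ← ENNReal.ofReal_rpow_of_nonneg hN.le (by linarith : (0:ℝ) ≤ ρ - 1)]
  have hmemh₀ : MemLp h₀ q μ := ⟨hh₀meas, by rw [hEh₀]; exact ENNReal.ofReal_lt_top⟩
  have hint_h₀ : Integrable h₀ μ := hmemh₀.integrable hq1
  -- mean of h₀
  set c : ℝ := ∫ t in Set.Ioo (0:ℝ) 1, h₀ t with hcdef
  have hc : |c| ≤ N ^ (ρ - 1) := by
    have h1 : |c| ≤ ∫ t, ‖h₀ t‖ ∂μ := norm_integral_le_integral_norm h₀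
    have h2 : ENNReal.ofReal (∫ t, ‖h₀ t‖ ∂μ) = eLpNorm h₀ 1 μ := by
      rw [eLpNorm_one_eq_lintegral_enorm]
      exact ofReal_integral_norm_eq_lintegral_enorm hint_h₀
    have h3 : eLpNorm h₀ 1 μ ≤ eLpNorm h₀ q μ := by
      have := eLpNorm_le_eLpNorm_mul_rpow_measure_univ hq1 hh₀meas (p := 1) (q := q)
      rwa [huniv, ENNReal.one_rpow, mul_one] at this
    have h4 : ∫ t, ‖h₀ t‖ ∂μ ≤ N ^ (ρ - 1) := by
      rw [← ENNReal.ofReal_le_ofReal_iff (Real.rpow_nonneg hN.le _), h2, ← hEh₀]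
      exact h3
    linarith
  -- integral of |g|^ρ
  have hIg : Integrable g μ := hg.integrable hp1
  have habsmeas : AEStronglyMeasurable (fun t => |g t| ^ ρ) μ := by
    have hF2 : Measurable fun x : ℝ => |x| ^ ρ := by fun_prop
    exact (hF2.comp_aemeasurable hgae).aestronglyMeasurable
  have hIabsInt : Integrable (fun t => |g t| ^ ρ) μ := by
    have := hg.integrable_norm_rpow hp0 hptop
    simpa [hpr, Real.norm_eq_abs] using this
  have hIabs : ∫ t, |g t| ^ ρ ∂μ = N ^ ρ := by
    rw [integral_eq_lintegral_of_nonneg_ae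
        (Filter.Eventually.of_forall fun t => Real.rpow_nonneg (abs_nonneg _) ρ) habsmeas]
    have : ∫⁻ t, ENNReal.ofReal (|g t| ^ ρ) ∂μ = ∫⁻ t, (‖g t‖₊ : ℝ≥0∞) ^ ρ ∂μ := by
      refine lintegral_congr fun t => ?_
      rw [← enorm_eq_nnnorm, ← ofReal_norm, Real.norm_eq_abs,
        ENNReal.ofReal_rpow_of_nonneg (abs_nonneg _) hρ0.le]
    rw [this, hLg, ENNReal.ofReal_rpow_of_nonneg hN.le hρ0.le,
      ENNReal.toReal_ofReal (Real.rpow_nonneg hN.le _)]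
  -- the candidate function h
  have hmemh : MemLp (fun t => h₀ t - c) q μ := hmemh₀.sub (memLp_const c)
  have hmean : ∫ t in Set.Ioo (0:ℝ) 1, (h₀ t - c) = 0 := by
    rw [integral_sub hint_h₀ (integrable_const c), integral_const]
    simp only [measureReal_def, huniv]
    simp [hcdef, hμdef]
  have hV : ∫ t in Set.Ioo (0:ℝ) 1, g t * (h₀ t - c) = N ^ ρ := by
    have heq : ∀ t, g t * (h₀ t - c) = |g t| ^ ρ - c * g t := by
      intro t
      rw [mul_sub, hmul t]
      ring
    calc ∫ t in Set.Ioo (0:ℝ) 1, g t * (h₀ t - c)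
        = ∫ t, (|g t| ^ ρ - c * g t) ∂μ := by
          exact integral_congr_ae (Filter.Eventually.of_forall fun t => heq t)
      _ = (∫ t, |g t| ^ ρ ∂μ) - c * ∫ t, g t ∂μ := by
          rw [integral_sub hIabsInt (hIg.const_mul c), integral_const_mul]
      _ = N ^ ρ := by rw [hIabs, hgmean]; ring
  have hNρpos : (0:ℝ) < N ^ ρ := Real.rpow_pos_of_pos hN ρ
  have hne : ¬ (fun t => h₀ t - c) =ᵐ[μ] 0 := by
    intro hcon
    have hcon2 : (fun t => g t * (h₀ t - c)) =ᵐ[μ] 0 := by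
      filter_upwards [hcon] with t ht
      simp only [Pi.zero_apply] at ht ⊢
      rw [ht, mul_zero]
    have : ∫ t in Set.Ioo (0:ℝ) 1, g t * (h₀ t - c) = 0 := by
      rw [integral_congr_ae hcon2]; simp
    rw [hV] at this
    linarith
  -- bound on the norm of h
  have hbound : eLpNorm (fun t => h₀ t - c) q μ ≤ ENNReal.ofReal (2 * N ^ (ρ - 1)) := by
    have htri : eLpNorm (fun t => h₀ t - c) q μ ≤
        eLpNorm h₀ q μ + eLpNorm (fun _ : ℝ => c) q μ :=
      eLpNorm_sub_le hh₀meas aestronglyMeasurable_const hq1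
    have hconst : eLpNorm (fun _ : ℝ => c) q μ = ENNReal.ofReal |c| := by
      rw [eLpNorm_const c hq0 hμ0, huniv, ENNReal.one_rpow, mul_one,
        ← ofReal_norm, Real.norm_eq_abs]
    calc eLpNorm (fun t => h₀ t - c) q μ ≤ eLpNorm h₀ q μ + eLpNorm (fun _ : ℝ => c) q μ := htri
      _ = ENNReal.ofReal (N ^ (ρ - 1)) + ENNReal.ofReal |c| := by rw [hEh₀, hconst]
      _ ≤ ENNReal.ofReal (N ^ (ρ - 1)) + ENNReal.ofReal (N ^ (ρ - 1)) := by
          exact add_le_add le_rfl (ENNReal.ofReal_le_ofReal hc)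
      _ = ENNReal.ofReal (2 * N ^ (ρ - 1)) := by
          rw [← ENNReal.ofReal_add (Real.rpow_nonneg hN.le _) (Real.rpow_nonneg hN.le _)]
          ring_nf
  -- conclude
  refine le_trans ?_ (le_iSup_of_le (fun t => h₀ t - c) (le_iSup_of_le hmemh
    (le_iSup_of_le hmean (le_iSup_of_le hne le_rfl))))
  rw [hEg, hV]
  have hdpos : (0:ℝ) < 2 * N ^ (ρ - 1) := by positivity
  have hNρ : N ^ ρ = N ^ (ρ - 1) * N := by
    rw [show ρ = (ρ - 1) + 1 by ring, Real.rpow_add hN, Real.rpow_one]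
    ring_nf
  calc ENNReal.ofReal (1 / 2) * ENNReal.ofReal N
      = ENNReal.ofReal (N ^ ρ) / ENNReal.ofReal (2 * N ^ (ρ - 1)) := by
        rw [← ENNReal.ofReal_div_of_pos hdpos, ← ENNReal.ofReal_mul (by norm_num)]
        congr 1
        rw [hNρ]
        have hne' : N ^ (ρ - 1) ≠ 0 := (Real.rpow_pos_of_pos hN _).ne'
        field_simp
    _ ≤ ENNReal.ofReal (N ^ ρ) / eLpNorm (fun t => h₀ t - c) q μ :=
        ENNReal.div_le_div_left hbound _
end
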